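/- Consider a pullback diagram of type (□⁺) with T quasilocal (so T = R_M). Then every (t_R)_T-invertible (t_R)_T-ideal of T is principal; i.e., Cl^{(t_R)_T}(T) = 0. -/

import Mathlib

open FractionalIdeal

/-- In a pullback of type (□⁺) with `T` quasilocal (so `T = R_M`): every
`(t_R)_T`-invertible `(t_R)_T`-ideal `J` of `T` is principal, i.e.
`Cl^{(t_R)_T}(T) = 0`. Here `K` is the common quotient field; `J` being a
`(t_R)_T`-ideal means that `F^{v_R} ⊆ J` for every nonzero finitely generated
fractional ideal `F` of `R` contained in `J`, and `(t_R)_T`-invertibility of `J`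
means that `(J·J⁻¹)^{t_R} = T`, i.e. some nonzero finitely generated fractional ideal
`F` of `R` with `F ⊆ J·J⁻¹` satisfies `1 ∈ F^{v_R}`. -/
theorem tRT_invertible_ideal_principal_of_local
    {T K : Type*} [CommRing T] [IsDomain T] [IsLocalRing T]
    [Field K] [Algebra T K] [IsFractionRing T K]
    (M : Ideal T) [M.IsMaximal] (hM : M ≠ ⊥)
    (D : Subring (T ⧸ M)) (hD : D ≠ ⊤)
    (hQF : ∀ x : T ⧸ M, ∃ a b : ↥D, (b : T ⧸ M) ≠ 0 ∧ x * (b : T ⧸ M) = (a : T ⧸ M))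
    (R : Subring T) (hR : R = D.comap (Ideal.Quotient.mk M))
    [IsFractionRing ↥R K]
    (J : FractionalIdeal (nonZeroDivisors T) K) (hJ : J ≠ 0)
    (htIdeal : ∀ F : FractionalIdeal (nonZeroDivisors ↥R) K, F ≠ 0 →
      (F : Submodule ↥R K).FG →
      ((F : Submodule ↥R K) : Set K) ⊆ ((J : Submodule T K) : Set K) →
      (((1 / (1 / F) : FractionalIdeal (nonZeroDivisors ↥R) K) : Submodule ↥R K) : Set K)
        ⊆ ((J : Submodule T K) : Set K))
    (hinv : ∃ F : FractionalIdeal (nonZeroDivisors ↥R) K, F ≠ 0 ∧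
      (F : Submodule ↥R K).FG ∧
      ((F : Submodule ↥R K) : Set K) ⊆
        (((J * (1 / J) : FractionalIdeal (nonZeroDivisors T) K) : Submodule T K) : Set K) ∧
      (1 : K) ∈ ((1 / (1 / F) : FractionalIdeal (nonZeroDivisors ↥R) K) : Submodule ↥R K)) :
    ∃ x : K, x ≠ 0 ∧ J = spanSingleton (nonZeroDivisors T) x := by

  classical
  -- M ⊆ R
  have hMR : ∀ m : T, m ∈ M → m ∈ R := by
    intro m hm
    rw [hR]
    show Ideal.Quotient.mk M m ∈ D
    rw [Ideal.Quotient.eq_zero_iff_mem.mpr hm]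
    exact D.zero_mem
  -- an element t ∈ T \\ R
  obtain ⟨d, hd⟩ : ∃ d : T ⧸ M, d ∉ D := by
    by_contra h
    push_neg at h
    exact hD ((Subring.eq_top_iff' D).mpr h)
  obtain ⟨t, rfl⟩ := Ideal.Quotient.mk_surjective d
  have htR : t ∉ R := by
    rw [hR]; exact hd
  have ht0 : t ≠ 0 := fun h => htR (h ▸ R.zero_mem)
  have hxt0 : algebraMap T K t ≠ 0 :=
    (map_ne_zero_iff _ (IsFractionRing.injective T K)).mpr ht0
  obtain ⟨F, hF0, hFfg, hFsub, hF1⟩ := hinv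
  -- Step 1 : J * (1/J) = 1
  have hle : J * (1 / J) ≤ 1 := mul_one_div_le_one
  have hJJ : J * (1 / J) = 1 := by
    by_contra hne
    obtain ⟨I₀, hI₀⟩ := le_one_iff_exists_coeIdeal.mp hle
    have hI₀top : I₀ ≠ ⊤ := by
      rintro rfl
      rw [FractionalIdeal.coeIdeal_top] at hI₀
      exact hne hI₀.symm
    have hI₀M : I₀ ≤ M := by
      rw [IsLocalRing.eq_maximalIdeal (inferInstance : M.IsMaximal)]
      exact IsLocalRing.le_maximalIdeal hI₀top
    -- algebraMap T K t lies in 1/F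
    have hx : (algebraMap T K t) ∈ (1 / F : FractionalIdeal (nonZeroDivisors ↥R) K) := by
      rw [mem_div_iff_of_ne_zero hF0]
      intro y hy
      have hy' : y ∈ (J * (1 / J) : FractionalIdeal (nonZeroDivisors T) K) := hFsub hy
      rw [← hI₀] at hy'
      obtain ⟨m, hm, rfl⟩ := (mem_coeIdeal _).mp hy'
      have h1 : t * m ∈ M := M.mul_mem_left t (hI₀M hm)
      refine (mem_one_iff _).mpr ⟨⟨t * m, hMR _ h1⟩, ?_⟩
      rw [IsScalarTower.algebraMap_apply ↥R T K]
      show algebraMap T K (t * m) = _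
      exact _root_.map_mul _ _ _
    have h1F0 : (1 / F : FractionalIdeal (nonZeroDivisors ↥R) K) ≠ 0 := by
      intro h
      rw [h] at hx
      exact hxt0 ((FractionalIdeal.mem_zero_iff _).mp hx)
    have hF1' : (1 : K) ∈ (1 / (1 / F) : FractionalIdeal (nonZeroDivisors ↥R) K) := hF1
    rw [mem_div_iff_of_ne_zero h1F0] at hF1'
    have hx1 : algebraMap T K t ∈ (1 : FractionalIdeal (nonZeroDivisors ↥R) K) := by
      have := hF1' _ hx
      rwa [one_mul] at this
    obtain ⟨r, hr⟩ := (mem_one_iff _).mp hx1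
    rw [IsScalarTower.algebraMap_apply ↥R T K] at hr
    have : (r : T) = t := IsFractionRing.injective T K hr
    exact htR (this ▸ r.2)
  -- Step 2 : get a ∈ J, b ∈ 1/J with a*b a unit
  have hne : ∃ a ∈ J, ∃ b ∈ (1 / J : FractionalIdeal (nonZeroDivisors T) K),
      a * b ∉ Submodule.map (Algebra.linearMap T K) M := by
    by_contra h
    push_neg at h
    have hle2 : (J : Submodule T K) * ((1 / J : FractionalIdeal (nonZeroDivisors T) K) :
        Submodule T K) ≤ Submodule.map (Algebra.linearMap T K) M :=
      Submodule.mul_le.mpr h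
    have h1 : (1 : K) ∈ Submodule.map (Algebra.linearMap T K) M := by
      apply hle2
      rw [← FractionalIdeal.coe_mul, hJJ]
      exact FractionalIdeal.one_mem_one _
    obtain ⟨m, hm, hm1⟩ := h1
    have : m = 1 := IsFractionRing.injective T K (by simpa using hm1)
    exact (Ideal.IsMaximal.ne_top (inferInstance : M.IsMaximal))
      (Ideal.eq_top_iff_one M |>.mpr (this ▸ hm))
  obtain ⟨a, ha, b, hb, hab⟩ := hne
  have habm : a * b ∈ (1 : FractionalIdeal (nonZeroDivisors T) K) := by
    rw [← hJJ]
    exact FractionalIdeal.mul_mem_mul ha hb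
  obtain ⟨u, hu⟩ := (mem_one_iff _).mp habm
  have huM : u ∉ M := fun h => hab ⟨u, h, hu⟩
  have huu : IsUnit u := by
    by_contra h
    exact huM (by
      rw [IsLocalRing.eq_maximalIdeal (inferInstance : M.IsMaximal)]
      exact (IsLocalRing.mem_maximalIdeal u).mpr (mem_nonunits_iff.mpr h))
  obtain ⟨v, hv⟩ := huu
  have ha0 : a ≠ 0 := by
    intro h
    rw [h, zero_mul] at hu
    have : u = 0 := IsFractionRing.injective T K (by simpa using hu)
    exact huM (this ▸ M.zero_mem)
  refine ⟨a, ha0, le_antisymm ?_ (spanSingleton_le_iff_mem.mpr ha)⟩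
  intro y hy
  have hby : b * y ∈ (1 : FractionalIdeal (nonZeroDivisors T) K) :=
    (mem_div_iff_of_ne_zero hJ).mp hb y hy
  obtain ⟨s, hs⟩ := (mem_one_iff _).mp hby
  show y ∈ spanSingleton (nonZeroDivisors T) a
  rw [mem_spanSingleton]
  refine ⟨(↑v⁻¹ : T) * s, ?_⟩
  have hv1 : algebraMap T K (↑v⁻¹ : T) * algebraMap T K u = 1 := by
    rw [← _root_.map_mul, ← hv, Units.inv_mul, _root_.map_one]
  calc ((↑v⁻¹ : T) * s) • a = algebraMap T K (↑v⁻¹ : T) * algebraMap T K s * a := by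
        rw [Algebra.smul_def, _root_.map_mul]
      _ = algebraMap T K (↑v⁻¹ : T) * (b * y) * a := by rw [hs]
      _ = (algebraMap T K (↑v⁻¹ : T) * algebraMap T K u) * y := by
        rw [hu]; ring
      _ = y := by rw [hv1, one_mul]
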